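/- (Claim 2) Let d ≥ 0, k ≥ 0, m ≥ 0 and n₁ ≥ 1, n₂ ≥ 1 be integers. Set T = max(0, max(0, v(d, k, n₁)) − max(0, v(d, k+1, n₁)) + n₁·(max(0, v(k, m, n₂)) − max(0, v(k−1, m, n₂))) − n₁(k+1)). Then: (1) if v(d, k+1, n₁) ≥ 0 and v(k−1, m, n₂) ≥ 0, then T = n₁(k+1); (2) if v(d, k+1, n₁) ≥ 0, v(k, m, n₂) ≥ 0 and v(k−1, m, n₂) ≤ 0, then T = n₁·(k(k+3)/2 + 1 − n₂·m(m+1)/2); (3) if v(d, k, n₁) ≥ 0, v(d, k+1, n₁) ≤ 0 and v(k−1, m, n₂) ≥ 0, then T = d(d+3)/2 + 1 − n₁·k(k+1)/2; (4) if v(d, k+1, n₁) ≤ 0, v(k−1, m, n₂) ≤ 0 and d(d+3)/2 + 1 − n₁n₂·m(m+1)/2 ≥ 0, then T = d(d+3)/2 + 1 − n₁n₂·m(m+1)/2; (5) in all remaining cases T = 0. -/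
import Mathlib


/-- The virtual dimension `v(δ, μ, ν) = δ(δ+3)/2 + 1 − ν·μ(μ+1)/2` (as a rational
number) of the vector space associated with the homogeneous linear system
`L_δ(μ^ν)`. -/
def vdim (δ : ℤ) (μ ν : ℕ) : ℚ :=
  (δ : ℚ) * ((δ : ℚ) + 3) / 2 + 1 - (ν : ℚ) * ((μ : ℚ) * ((μ : ℚ) + 1)) / 2

/-- **Claim 2.** The dimension
`T = max(0, dim Im ρ_Y + dim Im (r₁,…,r_{n₁}) − n₁(k+1))`
of the (proper, by the Generalized Transversality Lemma) intersection of the images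
of the restriction maps, in the five cases determined by the signs of the relevant
virtual dimensions. -/
theorem claim2 (d k m n₁ n₂ : ℕ) (hn₁ : 1 ≤ n₁) (hn₂ : 1 ≤ n₂)
    (T : ℚ)
    (hT : T = max 0 (max 0 (vdim d k n₁) - max 0 (vdim d (k + 1) n₁)
      + (n₁ : ℚ) * (max 0 (vdim k m n₂) - max 0 (vdim ((k : ℤ) - 1) m n₂))
      - (n₁ : ℚ) * ((k : ℚ) + 1))) :
    (0 ≤ vdim d (k + 1) n₁ → 0 ≤ vdim ((k : ℤ) - 1) m n₂ →
      T = (n₁ : ℚ) * ((k : ℚ) + 1)) ∧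
    (0 ≤ vdim d (k + 1) n₁ → 0 ≤ vdim k m n₂ → vdim ((k : ℤ) - 1) m n₂ ≤ 0 →
      T = (n₁ : ℚ) * ((k : ℚ) * ((k : ℚ) + 3) / 2 + 1
        - (n₂ : ℚ) * ((m : ℚ) * ((m : ℚ) + 1)) / 2)) ∧
    (0 ≤ vdim d k n₁ → vdim d (k + 1) n₁ ≤ 0 → 0 ≤ vdim ((k : ℤ) - 1) m n₂ →
      T = (d : ℚ) * ((d : ℚ) + 3) / 2 + 1 - (n₁ : ℚ) * ((k : ℚ) * ((k : ℚ) + 1)) / 2) ∧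
    (vdim d (k + 1) n₁ ≤ 0 → vdim ((k : ℤ) - 1) m n₂ ≤ 0 →
      0 ≤ (d : ℚ) * ((d : ℚ) + 3) / 2 + 1
        - (n₁ : ℚ) * (n₂ : ℚ) * ((m : ℚ) * ((m : ℚ) + 1)) / 2 →
      T = (d : ℚ) * ((d : ℚ) + 3) / 2 + 1
        - (n₁ : ℚ) * (n₂ : ℚ) * ((m : ℚ) * ((m : ℚ) + 1)) / 2) ∧
    (¬(0 ≤ vdim d (k + 1) n₁ ∧ 0 ≤ vdim ((k : ℤ) - 1) m n₂) →
     ¬(0 ≤ vdim d (k + 1) n₁ ∧ 0 ≤ vdim k m n₂ ∧ vdim ((k : ℤ) - 1) m n₂ ≤ 0) →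
     ¬(0 ≤ vdim d k n₁ ∧ vdim d (k + 1) n₁ ≤ 0 ∧ 0 ≤ vdim ((k : ℤ) - 1) m n₂) →
     ¬(vdim d (k + 1) n₁ ≤ 0 ∧ vdim ((k : ℤ) - 1) m n₂ ≤ 0 ∧
        0 ≤ (d : ℚ) * ((d : ℚ) + 3) / 2 + 1
          - (n₁ : ℚ) * (n₂ : ℚ) * ((m : ℚ) * ((m : ℚ) + 1)) / 2) →
      T = 0) := by
  have hn₁' : (1 : ℚ) ≤ (n₁ : ℚ) := by exact_mod_cast hn₁
  have hn₁0 : (0 : ℚ) ≤ (n₁ : ℚ) := by positivity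
  have hk0 : (0 : ℚ) ≤ (k : ℚ) := by positivity
  set A := vdim d k n₁ with hA
  set B := vdim d (k + 1) n₁ with hB
  set C := vdim (k : ℤ) m n₂ with hC
  set D := vdim ((k : ℤ) - 1) m n₂ with hD
  set E : ℚ := (d : ℚ) * ((d : ℚ) + 3) / 2 + 1
      - (n₁ : ℚ) * (n₂ : ℚ) * ((m : ℚ) * ((m : ℚ) + 1)) / 2 with hEdef
  have hAB : A = B + (n₁ : ℚ) * ((k : ℚ) + 1) := by
    rw [hA, hB]; simp only [vdim]; push_cast; ring
  have hCD : C = D + ((k : ℚ) + 1) := by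
    rw [hC, hD]; simp only [vdim]; push_cast; ring
  have hE1 : E = A + (n₁ : ℚ) * D := by
    rw [hEdef, hA, hD]; simp only [vdim]; push_cast; ring
  have hE2 : E = B + (n₁ : ℚ) * C := by
    rw [hEdef, hB, hC]; simp only [vdim]; push_cast; ring
  have hAval : A = (d : ℚ) * ((d : ℚ) + 3) / 2 + 1
      - (n₁ : ℚ) * ((k : ℚ) * ((k : ℚ) + 1)) / 2 := by
    rw [hA]; simp only [vdim]; push_cast; ring
  have hCval : C = (k : ℚ) * ((k : ℚ) + 3) / 2 + 1
      - (n₂ : ℚ) * ((m : ℚ) * ((m : ℚ) + 1)) / 2 := by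
    rw [hC]; simp only [vdim]; push_cast; ring
  have hnk : (0 : ℚ) ≤ (n₁ : ℚ) * ((k : ℚ) + 1) := by positivity
  refine ⟨?_, ?_, ?_, ?_, ?_⟩
  · -- Case 1
    intro hBpos hDpos
    have hApos : 0 ≤ A := by linarith
    have hCpos : 0 ≤ C := by linarith
    rw [hT, max_eq_right hApos, max_eq_right hBpos, max_eq_right hCpos,
      max_eq_right hDpos]
    have : A - B + (n₁ : ℚ) * (C - D) - (n₁ : ℚ) * ((k : ℚ) + 1)
        = (n₁ : ℚ) * ((k : ℚ) + 1) := by rw [hAB, hCD]; ring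
    rw [this]
    exact max_eq_right hnk
  · -- Case 2
    intro hBpos hCpos hDneg
    have hApos : 0 ≤ A := by linarith
    rw [hT, max_eq_right hApos, max_eq_right hBpos, max_eq_right hCpos,
      max_eq_left hDneg]
    have : A - B + (n₁ : ℚ) * (C - 0) - (n₁ : ℚ) * ((k : ℚ) + 1)
        = (n₁ : ℚ) * C := by rw [hAB]; ring
    rw [this, max_eq_right (mul_nonneg hn₁0 hCpos), hCval]
  · -- Case 3
    intro hApos hBneg hDpos
    have hCpos : 0 ≤ C := by linarith
    rw [hT, max_eq_right hApos, max_eq_left hBneg, max_eq_right hCpos,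
      max_eq_right hDpos]
    have : A - 0 + (n₁ : ℚ) * (C - D) - (n₁ : ℚ) * ((k : ℚ) + 1) = A := by
      rw [hCD]; ring
    rw [this, max_eq_right hApos, hAval]
  · -- Case 4
    intro hBneg hDneg hEpos
    have hnD : (n₁ : ℚ) * D ≤ 0 := mul_nonpos_of_nonneg_of_nonpos hn₁0 hDneg
    have hApos : 0 ≤ A := by linarith
    have hnC : 0 ≤ (n₁ : ℚ) * C := by linarith
    have hCpos : 0 ≤ C := nonneg_of_mul_nonneg_right hnC (by linarith)
    rw [hT, max_eq_right hApos, max_eq_left hBneg, max_eq_right hCpos,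
      max_eq_left hDneg]
    have : A - 0 + (n₁ : ℚ) * (C - 0) - (n₁ : ℚ) * ((k : ℚ) + 1) = E := by
      rw [hAB, hE2]; ring
    rw [this, max_eq_right hEpos]
  · -- Case 5
    intro h1 h2 h3 h4
    rcases le_total 0 B with hBpos | hBneg <;> rcases le_total 0 D with hDpos | hDneg
    · exact absurd ⟨hBpos, hDpos⟩ h1
    · -- B ≥ 0, D ≤ 0 : must have C < 0
      have hCneg : C ≤ 0 := by
        by_contra hc
        exact h2 ⟨hBpos, le_of_lt (lt_of_not_ge hc), hDneg⟩
      have hApos : 0 ≤ A := by linarith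
      rw [hT, max_eq_right hApos, max_eq_right hBpos, max_eq_left hCneg,
        max_eq_left hDneg]
      have : A - B + (n₁ : ℚ) * ((0 : ℚ) - 0) - (n₁ : ℚ) * ((k : ℚ) + 1)
          = 0 := by rw [hAB]; ring
      rw [this, max_self]
    · -- B ≤ 0, D ≥ 0 : must have A < 0
      have hAneg : A ≤ 0 := by
        by_contra ha
        exact h3 ⟨le_of_lt (lt_of_not_ge ha), hBneg, hDpos⟩
      have hCpos : 0 ≤ C := by linarith
      rw [hT, max_eq_left hAneg, max_eq_left hBneg, max_eq_right hCpos,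
        max_eq_right hDpos]
      have : (0 : ℚ) - 0 + (n₁ : ℚ) * (C - D) - (n₁ : ℚ) * ((k : ℚ) + 1)
          = 0 := by rw [hCD]; ring
      rw [this, max_self]
    · -- B ≤ 0, D ≤ 0 : must have E < 0
      have hEneg : E ≤ 0 := by
        by_contra he
        exact h4 ⟨hBneg, hDneg, le_of_lt (lt_of_not_ge he)⟩
      rw [hT, max_eq_left hBneg, max_eq_left hDneg]
      have hnD : (n₁ : ℚ) * D ≤ 0 := mul_nonpos_of_nonneg_of_nonpos hn₁0 hDneg
      rcases le_total 0 A with hApos | hAneg <;> rcases le_total 0 C with hCpos | hCneg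
      · rw [max_eq_right hApos, max_eq_right hCpos]
        exact max_eq_left (by linarith)
      · rw [max_eq_right hApos, max_eq_left hCneg]
        exact max_eq_left (by linarith)
      · rw [max_eq_left hAneg, max_eq_right hCpos]
        have hnC : (n₁ : ℚ) * C = (n₁ : ℚ) * D + (n₁ : ℚ) * ((k : ℚ) + 1) := by
          rw [hCD]; ring
        exact max_eq_left (by linarith)
      · rw [max_eq_left hAneg, max_eq_left hCneg]
        exact max_eq_left (by linarith)
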